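/- The function φ̂ : (0,∞) → ℝ defined by φ̂(z) = 2·L₂ᴹ·β·z^β·F̄₂(z)·exp(a·N₂ᴹ/(L₂ₘ·(β−σ−1)·z^{β−σ−2})), where F̄₂(z) = (z·a/(β·L₂ₘ²))·(N̄₂/((β−1)·z^{β−1}) + L̄₂·N₂ᴹ/(L₂ₘ·(2β−σ−1)·z^{2β−σ−1}))·z^{−β} + L̄₂/(2β·L₂ₘ²·z^{2β}), is strictly decreasing on (0,∞), tends to +∞ as z → 0⁺, and tends to 0 as z → +∞. Consequently there is a unique α₀₁ > 0 with φ̂(α₀₁) = 1, and φ̂(z) < 1 for all z > α₀₁. -/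

import Mathlib

open Real Set Filter Topology

noncomputable section

/-- `F̄₂(z)`. -/
def Fbar2 (a β σ L2m N2M Lbar2 Nbar2 : ℝ) (z : ℝ) : ℝ :=
  (z * a / (β * L2m ^ 2)) * (Nbar2 / ((β - 1) * z ^ (β - 1)) +
      Lbar2 * N2M / (L2m * (2 * β - σ - 1) * z ^ (2 * β - σ - 1))) * z ^ (-β) +
    Lbar2 / (2 * β * L2m ^ 2 * z ^ (2 * β))

/-- `φ̂(z) = 2·L₂ᴹ·β·z^β·F̄₂(z)·exp(a·N₂ᴹ/(L₂ₘ·(β−σ−1)·z^{β−σ−2}))`. -/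
def phihat (a β σ L2m L2M N2M Lbar2 Nbar2 : ℝ) (z : ℝ) : ℝ :=
  2 * L2M * β * z ^ β * Fbar2 a β σ L2m N2M Lbar2 Nbar2 z *
    Real.exp (a * N2M / (L2m * (β - σ - 1) * z ^ (β - σ - 2)))

/-- Properties of the model function. -/
lemma gprops (c1 c2 c3 c p1 p2 p3 q : ℝ) (h1 : 0 < c1) (h2 : 0 < c2) (h3 : 0 < c3)
    (hc : 0 < c) (hp1 : p1 < 0) (hp2 : p2 < 0) (hp3 : p3 < 0) (hq : q < 0) :
    StrictAntiOn (fun z : ℝ =>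
        (c1 * z ^ p1 + c2 * z ^ p2 + c3 * z ^ p3) * Real.exp (c * z ^ q)) (Ioi 0) ∧
    Tendsto (fun z : ℝ =>
        (c1 * z ^ p1 + c2 * z ^ p2 + c3 * z ^ p3) * Real.exp (c * z ^ q))
      (𝓝[>] (0:ℝ)) atTop ∧
    Tendsto (fun z : ℝ =>
        (c1 * z ^ p1 + c2 * z ^ p2 + c3 * z ^ p3) * Real.exp (c * z ^ q)) atTop (𝓝 0) ∧
    ContinuousOn (fun z : ℝ =>
        (c1 * z ^ p1 + c2 * z ^ p2 + c3 * z ^ p3) * Real.exp (c * z ^ q)) (Ioi 0) := by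
  refine ⟨?_, ?_, ?_, ?_⟩
  · -- strict anti
    intro x hx y hy hxy
    simp only [mem_Ioi] at hx hy
    have hrp : ∀ p : ℝ, p < 0 → y ^ p < x ^ p := fun p hp =>
      Real.rpow_lt_rpow_of_neg hx hxy hp
    have hS : c1 * y ^ p1 + c2 * y ^ p2 + c3 * y ^ p3
        < c1 * x ^ p1 + c2 * x ^ p2 + c3 * x ^ p3 :=
      add_lt_add (add_lt_add (mul_lt_mul_of_pos_left (hrp p1 hp1) h1)
        (mul_lt_mul_of_pos_left (hrp p2 hp2) h2)) (mul_lt_mul_of_pos_left (hrp p3 hp3) h3)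
    have hE : Real.exp (c * y ^ q) < Real.exp (c * x ^ q) :=
      Real.exp_lt_exp.2 (mul_lt_mul_of_pos_left (hrp q hq) hc)
    have hSy : 0 ≤ c1 * y ^ p1 + c2 * y ^ p2 + c3 * y ^ p3 := by positivity
    exact mul_lt_mul'' hS hE hSy (Real.exp_pos _).le
  · -- tendsto 0⁺ atTop
    have hb : Tendsto (fun z : ℝ => c3 * z ^ p3) (𝓝[>] (0:ℝ)) atTop := by
      have h := (tendsto_rpow_atTop (neg_pos.2 hp3)).comp tendsto_inv_nhdsGT_zero
      have h' : Tendsto (fun z : ℝ => z ^ p3) (𝓝[>] (0:ℝ)) atTop := by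
        refine h.congr' ?_
        filter_upwards [self_mem_nhdsWithin] with z hz
        simp only [Function.comp_apply]
        rw [Real.inv_rpow (le_of_lt hz), ← Real.rpow_neg (le_of_lt hz), neg_neg]
      exact h'.const_mul_atTop h3
    refine tendsto_atTop_mono' _ ?_ hb
    filter_upwards [self_mem_nhdsWithin] with z hz
    simp only [mem_Ioi] at hz
    have hE1 : (1:ℝ) ≤ Real.exp (c * z ^ q) := Real.one_le_exp (by positivity)
    have hA : 0 ≤ c1 * z ^ p1 := by positivity
    have hB : 0 ≤ c2 * z ^ p2 := by positivity
    have hSnn : 0 ≤ c1 * z ^ p1 + c2 * z ^ p2 + c3 * z ^ p3 := by positivity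
    calc c3 * z ^ p3 ≤ c1 * z ^ p1 + c2 * z ^ p2 + c3 * z ^ p3 := by linarith
      _ ≤ (c1 * z ^ p1 + c2 * z ^ p2 + c3 * z ^ p3) * Real.exp (c * z ^ q) :=
          le_mul_of_one_le_right hSnn hE1
  · -- tendsto atTop 0
    have hterm : ∀ p : ℝ, p < 0 → Tendsto (fun z : ℝ => z ^ p) atTop (𝓝 0) := by
      intro p hp
      have := tendsto_rpow_neg_atTop (neg_pos.2 hp)
      simpa using this
    have hS : Tendsto (fun z : ℝ => c1 * z ^ p1 + c2 * z ^ p2 + c3 * z ^ p3) atTop (𝓝 0) := by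
      have := (((hterm p1 hp1).const_mul c1).add ((hterm p2 hp2).const_mul c2)).add
        ((hterm p3 hp3).const_mul c3)
      simpa using this
    have hE : Tendsto (fun z : ℝ => Real.exp (c * z ^ q)) atTop (𝓝 1) := by
      have h0 : Tendsto (fun z : ℝ => c * z ^ q) atTop (𝓝 0) := by
        have := (hterm q hq).const_mul c
        simpa using this
      have := (Real.continuous_exp.tendsto 0).comp h0
      rw [Real.exp_zero] at this
      exact this
    have := hS.mul hE
    simpa using this
  · -- continuity
    have hco : ∀ p : ℝ, ContinuousOn (fun z : ℝ => z ^ p) (Ioi 0) := by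
      intro p x hx
      exact (Real.continuousAt_rpow_const x p (Or.inl (ne_of_gt hx))).continuousWithinAt
    exact (((continuousOn_const.mul (hco p1)).add (continuousOn_const.mul (hco p2))).add
        (continuousOn_const.mul (hco p3))).mul
      (Real.continuous_exp.comp_continuousOn (continuousOn_const.mul (hco q)))

theorem statement11
    (a β σ L2m L2M N2M Lbar2 Nbar2 : ℝ)
    (ha : 0 < a) (hβpos : 0 < β) (hσpos : 0 < σ) (hL2m : 0 < L2m) (hL2M : 0 < L2M)
    (hN2M : 0 < N2M) (hLbar2 : 0 < Lbar2) (hNbar2 : 0 < Nbar2)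
    (hβ : σ + 2 < β) :
    StrictAntiOn (phihat a β σ L2m L2M N2M Lbar2 Nbar2) (Ioi 0) ∧
    Tendsto (phihat a β σ L2m L2M N2M Lbar2 Nbar2) (nhdsWithin 0 (Ioi 0)) atTop ∧
    Tendsto (phihat a β σ L2m L2M N2M Lbar2 Nbar2) atTop (nhds 0) ∧
    (∃! z : ℝ, 0 < z ∧ phihat a β σ L2m L2M N2M Lbar2 Nbar2 z = 1) ∧
    (∀ z w : ℝ, 0 < z → phihat a β σ L2m L2M N2M Lbar2 Nbar2 z = 1 → z < w →
      phihat a β σ L2m L2M N2M Lbar2 Nbar2 w < 1) := by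
  have hβ1 : (0:ℝ) < β - 1 := by nlinarith
  have h2βσ : (0:ℝ) < 2 * β - σ - 1 := by nlinarith
  have hβσ1 : (0:ℝ) < β - σ - 1 := by nlinarith
  set c1 : ℝ := 2 * L2M * a * Nbar2 / (L2m ^ 2 * (β - 1)) with hc1def
  set c2 : ℝ := 2 * L2M * a * Lbar2 * N2M / (L2m ^ 3 * (2 * β - σ - 1)) with hc2def
  set c3 : ℝ := L2M * Lbar2 / L2m ^ 2 with hc3def
  set c : ℝ := a * N2M / (L2m * (β - σ - 1)) with hcdef
  have hc1 : 0 < c1 := by rw [hc1def]; positivity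
  have hc2 : 0 < c2 := by rw [hc2def]; positivity
  have hc3 : 0 < c3 := by rw [hc3def]; positivity
  have hc : 0 < c := by rw [hcdef]; positivity
  obtain ⟨hg1, hg2, hg3, hg4⟩ := gprops c1 c2 c3 c (2 - β) (σ + 2 - 2 * β) (-β) (σ + 2 - β)
    hc1 hc2 hc3 hc (by linarith) (by linarith) (by linarith) (by linarith)
  set g : ℝ → ℝ := fun z =>
    (c1 * z ^ (2 - β) + c2 * z ^ (σ + 2 - 2 * β) + c3 * z ^ (-β)) *
      Real.exp (c * z ^ (σ + 2 - β)) with hgdef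
  set f := phihat a β σ L2m L2M N2M Lbar2 Nbar2 with hfdef
  have heq : ∀ z : ℝ, 0 < z → f z = g z := by
    intro z hz
    have hz0 : z ≠ 0 := ne_of_gt hz
    have hβ0 : β ≠ 0 := ne_of_gt hβpos
    have hL : L2m ≠ 0 := ne_of_gt hL2m
    rw [hfdef, hgdef]
    show 2 * L2M * β * z ^ β * Fbar2 a β σ L2m N2M Lbar2 Nbar2 z *
        Real.exp (a * N2M / (L2m * (β - σ - 1) * z ^ (β - σ - 2))) = _
    have hexp : a * N2M / (L2m * (β - σ - 1) * z ^ (β - σ - 2)) = c * z ^ (σ + 2 - β) := by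
      rw [show σ + 2 - β = -(β - σ - 2) by ring, Real.rpow_neg hz.le, hcdef]
      have hne : z ^ (β - σ - 2) ≠ 0 := (Real.rpow_pos_of_pos hz _).ne'
      field_simp
    rw [hexp]
    congr 1
    unfold Fbar2
    have p1 : z ^ (1:ℝ) * (z ^ (β - 1))⁻¹ * z ^ β * z ^ (-β) = z ^ (2 - β) := by
      rw [← Real.rpow_neg hz.le, ← Real.rpow_add hz, ← Real.rpow_add hz, ← Real.rpow_add hz]
      ring_nf
    have p2 : z ^ (1:ℝ) * (z ^ (2 * β - σ - 1))⁻¹ * z ^ β * z ^ (-β) = z ^ (σ + 2 - 2 * β) := by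
      rw [← Real.rpow_neg hz.le, ← Real.rpow_add hz, ← Real.rpow_add hz, ← Real.rpow_add hz]
      ring_nf
    have p3 : (z ^ (2 * β))⁻¹ * z ^ β = z ^ (-β) := by
      rw [← Real.rpow_neg hz.le, ← Real.rpow_add hz]
      ring_nf
    have hT : 2 * L2M * β * z ^ β * ((z * a / (β * L2m ^ 2)) *
        (Nbar2 / ((β - 1) * z ^ (β - 1)) +
          Lbar2 * N2M / (L2m * (2 * β - σ - 1) * z ^ (2 * β - σ - 1))) * z ^ (-β) +
        Lbar2 / (2 * β * L2m ^ 2 * z ^ (2 * β)))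
        = (2 * L2M * β * a * Nbar2 / (β * L2m ^ 2 * (β - 1))) *
            (z ^ (1:ℝ) * (z ^ (β - 1))⁻¹ * z ^ β * z ^ (-β))
          + (2 * L2M * β * a * Lbar2 * N2M / (β * L2m ^ 2 * L2m * (2 * β - σ - 1))) *
            (z ^ (1:ℝ) * (z ^ (2 * β - σ - 1))⁻¹ * z ^ β * z ^ (-β))
          + (2 * L2M * β * Lbar2 / (2 * β * L2m ^ 2)) * ((z ^ (2 * β))⁻¹ * z ^ β) := by
      rw [show (z:ℝ) * a = z ^ (1:ℝ) * a by rw [Real.rpow_one]]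
      simp only [div_eq_mul_inv, mul_inv]
      ring
    rw [hT, p1, p2, p3,
      show 2 * L2M * β * a * Nbar2 / (β * L2m ^ 2 * (β - 1)) = c1 by
        rw [hc1def, div_eq_div_iff (by positivity) (by positivity)]; ring,
      show 2 * L2M * β * a * Lbar2 * N2M / (β * L2m ^ 2 * L2m * (2 * β - σ - 1)) = c2 by
        rw [hc2def, div_eq_div_iff (by positivity) (by positivity)]; ring,
      show 2 * L2M * β * Lbar2 / (2 * β * L2m ^ 2) = c3 by
        rw [hc3def, div_eq_div_iff (by positivity) (by positivity)]; ring]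
  have hfanti : StrictAntiOn f (Ioi 0) := by
    intro x hx y hy hxy
    rw [heq x hx, heq y hy]
    exact hg1 hx hy hxy
  have hf0 : Tendsto f (𝓝[>] (0:ℝ)) atTop := by
    refine hg2.congr' ?_
    filter_upwards [self_mem_nhdsWithin] with z hz using (heq z hz).symm
  have hfT : Tendsto f atTop (𝓝 0) := by
    refine hg3.congr' ?_
    filter_upwards [eventually_gt_atTop 0] with z hz using (heq z hz).symm
  have hfc : ContinuousOn f (Ioi 0) := hg4.congr fun z hz => heq z hz
  -- existence
  obtain ⟨x, hx2, hx0⟩ :=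
    ((hf0.eventually (eventually_ge_atTop 2)).and self_mem_nhdsWithin).exists
  obtain ⟨y, hy1, hyx⟩ :=
    ((hfT.eventually_lt_const (by norm_num : (0:ℝ) < 1)).and (eventually_gt_atTop x)).exists
  have hy0 : 0 < y := hx0.trans hyx
  have hsub : Icc x y ⊆ Ioi 0 := fun t ht => lt_of_lt_of_le hx0 ht.1
  obtain ⟨z0, hz0mem, hz0⟩ := intermediate_value_Icc' hyx.le (hfc.mono hsub)
    (⟨hy1.le, by linarith⟩ : (1:ℝ) ∈ Icc (f y) (f x))
  have hz0pos : 0 < z0 := hsub hz0mem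
  refine ⟨hfanti, hf0, hfT, ⟨z0, ⟨hz0pos, hz0⟩, ?_⟩, ?_⟩
  · rintro w ⟨hw0, hw1⟩
    exact hfanti.injOn (mem_Ioi.2 hw0) (mem_Ioi.2 hz0pos) (by rw [hw1, hz0])
  · intro z w hz hz1 hzw
    have hw : 0 < w := hz.trans hzw
    calc f w < f z := hfanti (mem_Ioi.2 hz) (mem_Ioi.2 hw) hzw
      _ = 1 := hz1
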